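/- Let (X,d) be a finite metric space, z ∈ X, q ≥ 1, and r, R > 0 with β = r/R, R_0 = R/D_β, R_1 = R − R_0. Assume r < R_0, β·D_β < 1/(5√2), and R_0 + r < R_1/100, and assume the light-ball condition |Ball(z,R_1)| ≤ ρ_q(β)·|Ball(z,R_0)|, where ρ_q(β) = (1/β)^{q+1}. Set γ = 25r/R_0². Then the Lebesgue measure of S_γ satisfies μ(S_γ) ≥ R/2. -/

import Mathlib

set_option maxHeartbeats 1000000

open scoped Classical

open MeasureTheory intervalIntegral
open scoped ENNReal

noncomputable def fInt (n : ℝ → ℝ) (s : ℝ) : ℝ := ∫ x in (0:ℝ)..s, n x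

noncomputable def nPot (n : ℝ → ℝ) (lam s : ℝ) : ℝ := n s + lam * fInt n s

def badA (n : ℝ → ℝ) (r γ lam R0 R1 c : ℝ) : Set ℝ :=
  {t | t ∈ Set.Ioc (3*R0) R1 ∧
       ¬ (n (t+r) - n (t-r) ≤ γ * fInt n (t-r)) ∧
       t ≤ R1 - 2*r ∧ c ≤ nPot n lam (t-r)}

lemma fInt_diff (n : ℝ → ℝ) (hmono : Monotone n) (a b : ℝ) :
    fInt n b - fInt n a = ∫ x in a..b, n x := by
  have h := integral_add_adjacent_intervals (a := (0:ℝ)) (b := a) (c := b)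
    (hmono.intervalIntegrable (μ := volume)) (hmono.intervalIntegrable (μ := volume))
  simp only [fInt]
  linarith [h]

lemma fInt_lb (n : ℝ → ℝ) (hmono : Monotone n) {a b : ℝ} (hab : a ≤ b) :
    (b - a) * n a ≤ fInt n b - fInt n a := by
  rw [fInt_diff n hmono]
  have h := integral_mono_on (μ := volume) hab (_root_.intervalIntegrable_const (c := n a))
    hmono.intervalIntegrable (fun x hx => hmono hx.1)
  simpa using h

lemma fInt_ub (n : ℝ → ℝ) (hmono : Monotone n) {a b : ℝ} (hab : a ≤ b) :
    fInt n b - fInt n a ≤ (b - a) * n b := by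
  rw [fInt_diff n hmono]
  have h := integral_mono_on (μ := volume) hab hmono.intervalIntegrable
    (_root_.intervalIntegrable_const (c := n b)) (fun x hx => hmono hx.2)
  simpa using h

lemma fInt_mono (n : ℝ → ℝ) (hmono : Monotone n) (hnn : ∀ t, 0 ≤ n t) :
    Monotone (fInt n) := by
  intro a b hab
  have := fInt_lb n hmono hab
  nlinarith [hnn a]

lemma fInt_nonneg (n : ℝ → ℝ) (hmono : Monotone n) (hnn : ∀ t, 0 ≤ n t) {s : ℝ} (hs : 0 ≤ s) :
    0 ≤ fInt n s := by
  have h0 : fInt n 0 = 0 := by simp [fInt]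
  have := fInt_mono n hmono hnn hs
  linarith

lemma nPot_mono (n : ℝ → ℝ) (lam : ℝ) (hlam : 0 ≤ lam) (hmono : Monotone n)
    (hnn : ∀ t, 0 ≤ n t) : Monotone (nPot n lam) := by
  intro a b hab
  have h1 := hmono hab
  have h2 := fInt_mono n hmono hnn hab
  have := mul_le_mul_of_nonneg_left h2 hlam
  simp only [nPot]; linarith

lemma coeffs (r R0 lam ε γ : ℝ) (hr : 0 < r) (hR0 : 0 < R0)
    (hlam : lam = 5 / (Real.sqrt 2 * R0)) (hε : ε = 5 * Real.sqrt 2 * r / R0)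
    (hγ : γ = 25 * r / R0 ^ 2) : ε = 2 * lam * r ∧ γ = ε * lam := by
  have hs2p : (0:ℝ) < Real.sqrt 2 := Real.sqrt_pos.mpr (by norm_num)
  have hs2 : Real.sqrt 2 * Real.sqrt 2 = 2 := Real.mul_self_sqrt (by norm_num)
  refine ⟨?_, ?_⟩
  · rw [hε, hlam]; field_simp; linear_combination hs2
  · rw [hγ, hε, hlam]; field_simp; ring_nf

lemma pot_step (n : ℝ → ℝ) (hmono : Monotone n) (hnn : ∀ t, 0 ≤ n t)
    (r lam ε γ t : ℝ) (hr : 0 < r) (hlam : 0 ≤ lam)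
    (hε2 : ε = 2 * lam * r) (hγε : γ = ε * lam)
    (htr : 0 ≤ t - r)
    (hbad : γ * fInt n (t - r) < n (t + r) - n (t - r)) :
    (1 + ε) * nPot n lam (t - r) ≤ nPot n lam (t + r) := by
  have h2 : 2 * r * n (t - r) ≤ fInt n (t + r) - fInt n (t - r) := by
    have := fInt_lb n hmono (show t - r ≤ t + r by linarith)
    have he : t + r - (t - r) = 2 * r := by ring
    rwa [he] at this
  have h2' := mul_le_mul_of_nonneg_left h2 hlam
  have hF : 0 ≤ fInt n (t - r) := fInt_nonneg n hmono hnn htr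
  have hN : 0 ≤ n (t - r) := hnn _
  simp only [nPot]
  nlinarith [hbad, h2', hF, hN]

lemma key_step (n : ℝ → ℝ) (hmono : Monotone n) (hnn : ∀ t, 0 ≤ n t)
    (r lam ε γ R0 R1 c ξ : ℝ) (hr : 0 < r) (hR0 : 0 < R0) (hlam : 0 ≤ lam)
    (hε2 : ε = 2 * lam * r) (hγε : γ = ε * lam) (hrR0 : r ≤ R0) (hξ : 0 < ξ) :
    volume (badA n r γ lam R0 R1 c)
      ≤ ENNReal.ofReal (2*r + ξ) + volume (badA n r γ lam R0 R1 ((1+ε)*c)) := by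
  have hε0 : 0 ≤ ε := by rw [hε2]; positivity
  rcases Set.eq_empty_or_nonempty (badA n r γ lam R0 R1 c) with he | hne
  · simp [he]
  · set S := badA n r γ lam R0 R1 c with hS
    obtain ⟨t', ht', hlt⟩ := Real.lt_sInf_add_pos hne hξ
    have hbdd : BddBelow S := ⟨3*R0, fun t ht => le_of_lt ht.1.1⟩
    have hcover : S ⊆ Set.Ico (sInf S) (t' + 2*r) ∪ badA n r γ lam R0 R1 ((1+ε)*c) := by
      intro t ht
      have hm : sInf S ≤ t := csInf_le hbdd ht
      by_cases hc : t < t' + 2*r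
      · exact Or.inl ⟨hm, hc⟩
      · push_neg at hc
        refine Or.inr ⟨ht.1, ht.2.1, ht.2.2.1, ?_⟩
        have hbad' : γ * fInt n (t' - r) < n (t' + r) - n (t' - r) := by
          have := ht'.2.1; push_neg at this; exact this
        have htr0 : 0 ≤ t' - r := by
          have := ht'.1.1; linarith
        have hstep := pot_step n hmono hnn r lam ε γ t' hr hlam hε2 hγε htr0 hbad'
        have hmono' := nPot_mono n lam hlam hmono hnn (show t' + r ≤ t - r by linarith)
        have hcc : (1+ε)*c ≤ (1+ε) * nPot n lam (t' - r) :=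
          mul_le_mul_of_nonneg_left ht'.2.2.2 (by linarith)
        linarith
    calc volume S ≤ volume (Set.Ico (sInf S) (t' + 2*r) ∪ badA n r γ lam R0 R1 ((1+ε)*c)) :=
          measure_mono hcover
      _ ≤ volume (Set.Ico (sInf S) (t' + 2*r)) + volume (badA n r γ lam R0 R1 ((1+ε)*c)) :=
          measure_union_le _ _
      _ ≤ ENNReal.ofReal (2*r + ξ) + volume (badA n r γ lam R0 R1 ((1+ε)*c)) := by
          gcongr
          rw [Real.volume_Ico]
          exact ENNReal.ofReal_le_ofReal (by linarith)

lemma iterate_step (n : ℝ → ℝ) (hmono : Monotone n) (hnn : ∀ t, 0 ≤ n t)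
    (r lam ε γ R0 R1 c ξ : ℝ) (hr : 0 < r) (hR0 : 0 < R0) (hlam : 0 ≤ lam)
    (hε2 : ε = 2 * lam * r) (hγε : γ = ε * lam) (hrR0 : r ≤ R0) (hξ : 0 < ξ) (k : ℕ) :
    volume (badA n r γ lam R0 R1 c)
      ≤ (k : ℝ≥0∞) * ENNReal.ofReal (2*r + ξ) + volume (badA n r γ lam R0 R1 ((1+ε)^k * c)) := by
  induction k with
  | zero => simp
  | succ k ih =>
    refine ih.trans ?_
    have := key_step n hmono hnn r lam ε γ R0 R1 ((1+ε)^k * c) ξ hr hR0 hlam hε2 hγε hrR0 hξ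
    have heq : (1+ε) * ((1+ε)^k * c) = (1+ε)^(k+1) * c := by ring
    rw [heq] at this
    calc (k : ℝ≥0∞) * ENNReal.ofReal (2*r + ξ) + volume (badA n r γ lam R0 R1 ((1+ε)^k * c))
        ≤ (k : ℝ≥0∞) * ENNReal.ofReal (2*r + ξ) +
          (ENNReal.ofReal (2*r + ξ) + volume (badA n r γ lam R0 R1 ((1+ε)^(k+1) * c))) := by
          gcongr
      _ = ((k+1 : ℕ) : ℝ≥0∞) * ENNReal.ofReal (2*r + ξ) +
          volume (badA n r γ lam R0 R1 ((1+ε)^(k+1) * c)) := by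
          push_cast; ring

lemma arith_main (r R R0 R1 Dβ ε lam ρ L : ℝ) (N : ℕ)
    (hr : 0 < r) (hR0 : 0 < R0) (hD : (101:ℝ) ≤ Dβ) (hRD : R0 * Dβ = R)
    (hR1 : R1 = R - R0)
    (hε : ε = 5 * Real.sqrt 2 * r / R0) (hrs : 5 * Real.sqrt 2 * r ≤ R0)
    (hlam : lam = 5 / (Real.sqrt 2 * R0))
    (hρ1 : 1 ≤ ρ) (hρlog : Real.log ρ = Dβ / 2)
    (hLdef : L = Real.log (2 * (1 + lam * R1) * ρ))
    (hNle : (N:ℝ) < L / Real.log (1+ε) + 1)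
    (hlog1ε : 0 < Real.log (1 + ε)) (hL0 : 0 ≤ L) :
    R/2 + (2*r*(N:ℝ) + r + 2*r) ≤ R1 - 3*R0 := by
  have hs2p : (0:ℝ) < Real.sqrt 2 := Real.sqrt_pos.mpr (by norm_num)
  have hs2 : Real.sqrt 2 * Real.sqrt 2 = 2 := Real.mul_self_sqrt (by norm_num)
  have hs2lb : (141/100:ℝ) ≤ Real.sqrt 2 := by nlinarith
  have hs2ub : Real.sqrt 2 ≤ (283/200:ℝ) := by nlinarith
  have hε0 : 0 < ε := by rw [hε]; positivity
  have hε1 : ε ≤ 1 := by rw [hε, div_le_one hR0]; exact hrs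
  have hRpos : 0 < R := by nlinarith
  have hR1R0 : R1 = R0 * (Dβ - 1) := by rw [hR1, ← hRD]; ring
  have hR1pos : 0 < R1 := by nlinarith
  have hloghalf : ε/2 ≤ Real.log (1+ε) := by
    have h := Real.log_le_sub_one_of_pos (show (0:ℝ) < 1/(1+ε) by positivity)
    rw [one_div, Real.log_inv] at h
    have h2 : ε/(1+ε) ≤ Real.log (1+ε) := by
      have hinv : (1+ε)⁻¹ - 1 = -(ε/(1+ε)) := by field_simp; ring
      rw [hinv] at h; linarith
    have h3 : ε/2 ≤ ε/(1+ε) := by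
      rw [div_le_div_iff₀ (by norm_num) (by linarith)]; nlinarith
    linarith
  have hdivle : L / Real.log (1+ε) ≤ L / (ε/2) :=
    div_le_div_of_nonneg_left hL0 (by positivity) hloghalf
  have h4rε : 4*r/ε = 2*Real.sqrt 2/5*R0 := by
    rw [hε]; field_simp; linear_combination (-2) * hs2
  have key1 : 2*r*(N:ℝ) ≤ (2*Real.sqrt 2/5*R0)*L + 2*r := by
    have h1 : (N:ℝ) ≤ L/(ε/2) + 1 := by linarith
    have h2 : 2*r*(N:ℝ) ≤ 2*r*(L/(ε/2) + 1) :=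
      mul_le_mul_of_nonneg_left h1 (by positivity)
    have h3 : 2*r*(L/(ε/2) + 1) = (4*r/ε)*L + 2*r := by
      field_simp; ring
    rw [h3, h4rε] at h2; exact h2
  have hlamR1e : lam * R1 = 5*(Dβ-1)/Real.sqrt 2 := by
    rw [hlam, hR1R0]; field_simp
  have hlamR10 : 0 ≤ lam * R1 := by
    rw [hlamR1e]
    apply div_nonneg _ hs2p.le
    nlinarith
  have hargpos : (0:ℝ) < 2 * (1 + lam * R1) * ρ := by nlinarith
  have harg2 : 2 * (1 + lam * R1) * ρ ≤ (15*Dβ) * ρ := by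
    apply mul_le_mul_of_nonneg_right _ (by linarith)
    have h5 : 5*(Dβ-1)/Real.sqrt 2 ≤ 5*Dβ/(141/100) :=
      div_le_div₀ (by nlinarith) (by nlinarith) (by norm_num) hs2lb
    rw [hlamR1e]
    nlinarith [h5]
  have hLb : L ≤ Real.log 15 + Real.log Dβ + Dβ/2 := by
    have h1 : L ≤ Real.log ((15*Dβ) * ρ) := by
      rw [hLdef]
      exact (Real.log_le_log_iff hargpos (lt_of_lt_of_le hargpos harg2)).mpr harg2
    have h2 : Real.log ((15*Dβ)*ρ) = Real.log 15 + Real.log Dβ + Real.log ρ := by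
      rw [Real.log_mul (by positivity) (by positivity),
        Real.log_mul (by norm_num) (by positivity)]
    rw [h2, hρlog] at h1; exact h1
  have hlog15 : Real.log 15 ≤ 278/100 := by
    have h1 : Real.log 15 ≤ Real.log 16 :=
      (Real.log_le_log_iff (by norm_num) (by norm_num)).mpr (by norm_num)
    have h2 : Real.log 16 = 4 * Real.log 2 := by
      rw [show (16:ℝ) = 2^(4:ℕ) by norm_num, Real.log_pow]; norm_num
    have := Real.log_two_lt_d9
    linarith
  have hlogD : Real.log Dβ ≤ 386/100 + Dβ/101 := by
    have h1 : Real.log (Dβ/101) ≤ Dβ/101 - 1 :=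
      Real.log_le_sub_one_of_pos (by positivity)
    have h2 : Real.log (Dβ/101) = Real.log Dβ - Real.log 101 :=
      Real.log_div (by positivity) (by norm_num)
    have h3 : Real.log 101 ≤ Real.log 128 :=
      (Real.log_le_log_iff (by norm_num) (by norm_num)).mpr (by norm_num)
    have h4 : Real.log 128 = 7 * Real.log 2 := by
      rw [show (128:ℝ) = 2^(7:ℕ) by norm_num, Real.log_pow]; norm_num
    have := Real.log_two_lt_d9
    linarith
  have hLb2 : L ≤ 664/100 + Dβ/101 + Dβ/2 := by linarith
  have hM : 2*Real.sqrt 2/5*R0 ≤ (566/1000)*R0 := by nlinarith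
  have hML : (2*Real.sqrt 2/5*R0)*L ≤ ((566/1000)*R0)*(664/100 + Dβ/101 + Dβ/2) := by
    apply mul_le_mul hM hLb2 hL0 (by positivity)
  have hexp : ((566/1000)*R0)*(664/100 + Dβ/101 + Dβ/2) = (375824/100000)*R0 + (29149/101000)*(R0*Dβ) := by
    ring
  rw [hexp, hRD] at hML
  have hr5 : 5*r ≤ (500/705)*R0 := by nlinarith
  have hR101 : 101*R0 ≤ R := by nlinarith
  rw [hR1]
  linarith

lemma aux (n : ℝ → ℝ) (r R R0 R1 Dβ γ lam ε ρ : ℝ)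
    (hmono : Monotone n) (hnn : ∀ t, 0 ≤ n t) (hn1 : 1 ≤ n R0)
    (hr : 0 < r) (hR0 : 0 < R0)
    (hcapn : n R1 ≤ ρ * n R0)
    (hlam : lam = 5 / (Real.sqrt 2 * R0))
    (hε : ε = 5 * Real.sqrt 2 * r / R0)
    (hγ : γ = 25 * r / R0 ^ 2)
    (hρ1 : 1 ≤ ρ) (hρlog : Real.log ρ = Dβ / 2)
    (hRD : R0 * Dβ = R) (hD : (101:ℝ) ≤ Dβ)
    (hrs : 5 * Real.sqrt 2 * r ≤ R0)
    (hR1 : R1 = R - R0) :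
    ENNReal.ofReal (R/2) ≤ volume {t : ℝ | t ∈ Set.Ioc (3*R0) R1 ∧
       n (t+r) - n (t-r) ≤ γ * ∫ x in (0:ℝ)..(t-r), n x} := by
  have hs2p : (0:ℝ) < Real.sqrt 2 := Real.sqrt_pos.mpr (by norm_num)
  have hs2 : Real.sqrt 2 * Real.sqrt 2 = 2 := Real.mul_self_sqrt (by norm_num)
  have hs2lb : (141/100:ℝ) ≤ Real.sqrt 2 := by nlinarith
  have hs2ub : Real.sqrt 2 ≤ (283/200:ℝ) := by nlinarith
  have hlam0 : 0 ≤ lam := by rw [hlam]; positivity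
  obtain ⟨hε2, hγε⟩ := coeffs r R0 lam ε γ hr hR0 hlam hε hγ
  have hε0 : 0 < ε := by rw [hε]; positivity
  have hε1 : ε ≤ 1 := by rw [hε, div_le_one hR0]; exact hrs
  have hrR0 : r ≤ R0 := by nlinarith
  have hRpos : 0 < R := by nlinarith
  have hR1R0 : R1 = R0 * (Dβ - 1) := by rw [hR1, ← hRD]; ring
  have hR1pos : 0 < R1 := by nlinarith
  have hlamR10 : 0 ≤ lam * R1 := mul_nonneg hlam0 hR1pos.le
  have hn0R : 0 ≤ n R0 := hnn _
  -- the cap for the potential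
  have hcap : ∀ s : ℝ, s ≤ R1 → nPot n lam s ≤ (1 + lam * R1) * (ρ * n R0) := by
    intro s hs
    have h1 : nPot n lam s ≤ nPot n lam R1 := nPot_mono n lam hlam0 hmono hnn hs
    have h2 : fInt n R1 ≤ R1 * n R1 := by
      have := fInt_ub n hmono (le_of_lt hR1pos : (0:ℝ) ≤ R1)
      have h0 : fInt n 0 = 0 := by simp [fInt]
      rw [h0] at this; linarith
    have h3 : nPot n lam R1 ≤ (1 + lam * R1) * n R1 := by
      simp only [nPot]
      nlinarith [mul_le_mul_of_nonneg_left h2 hlam0]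
    have h4 : (1 + lam * R1) * n R1 ≤ (1 + lam * R1) * (ρ * n R0) :=
      mul_le_mul_of_nonneg_left hcapn (by linarith)
    linarith
  set L := Real.log (2 * (1 + lam * R1) * ρ) with hLdef
  set N := ⌈L / Real.log (1 + ε)⌉₊ with hNdef
  have harg1 : (1:ℝ) ≤ 2 * (1 + lam * R1) * ρ := by nlinarith [hlamR10, hρ1]
  have hargpos : (0:ℝ) < 2 * (1 + lam * R1) * ρ := lt_of_lt_of_le one_pos harg1
  have hL0 : 0 ≤ L := Real.log_nonneg harg1
  have hlog1ε : 0 < Real.log (1 + ε) := Real.log_pos (by linarith)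
  have hNpow : 2 * (1 + lam * R1) * ρ ≤ (1 + ε)^N := by
    have h1 : L / Real.log (1 + ε) ≤ (N : ℝ) := Nat.le_ceil _
    have h2 : L ≤ (N : ℝ) * Real.log (1 + ε) := by
      rw [div_le_iff₀ hlog1ε] at h1; linarith
    have h3 : Real.log (2 * (1 + lam * R1) * ρ) ≤ Real.log ((1 + ε)^N) := by
      rw [Real.log_pow]; exact h2.trans_eq (by push_cast; ring)
    exact (Real.log_le_log_iff hargpos (by positivity)).mp h3
  have hempty : badA n r γ lam R0 R1 ((1+ε)^N * n R0) = ∅ := by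
    rw [Set.eq_empty_iff_forall_notMem]
    intro t ht
    have h1 : (1+ε)^N * n R0 ≤ nPot n lam (t - r) := ht.2.2.2
    have h2 : nPot n lam (t - r) ≤ (1 + lam * R1) * (ρ * n R0) :=
      hcap _ (by linarith [ht.1.2])
    have h3 : 2 * (1 + lam * R1) * ρ * n R0 ≤ (1+ε)^N * n R0 :=
      mul_le_mul_of_nonneg_right hNpow hn0R
    nlinarith
  -- bound on the bad measure
  have hξ : 0 < r / ((N:ℝ) + 1) := by positivity
  have hbadbound : volume (badA n r γ lam R0 R1 (n R0))
      ≤ ENNReal.ofReal (2*r*(N:ℝ) + r) := by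
    have h1 := iterate_step n hmono hnn r lam ε γ R0 R1 (n R0) (r / ((N:ℝ)+1))
      hr hR0 hlam0 hε2 hγε hrR0 hξ N
    rw [hempty] at h1
    simp only [measure_empty, add_zero] at h1
    refine h1.trans ?_
    rw [← ENNReal.ofReal_natCast N, ← ENNReal.ofReal_mul (by positivity)]
    apply ENNReal.ofReal_le_ofReal
    have hN1 : (N:ℝ) / ((N:ℝ)+1) ≤ 1 := by
      rw [div_le_one (by positivity)]; linarith
    have : (N:ℝ) * (2*r + r/((N:ℝ)+1)) = 2*r*(N:ℝ) + r * ((N:ℝ)/((N:ℝ)+1)) := by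
      field_simp
    rw [this]
    nlinarith
  -- inclusion
  have hincl : Set.Ioc (3*R0) R1 ⊆
      {t : ℝ | t ∈ Set.Ioc (3*R0) R1 ∧ n (t+r) - n (t-r) ≤ γ * ∫ x in (0:ℝ)..(t-r), n x}
      ∪ (badA n r γ lam R0 R1 (n R0) ∪ Set.Ioc (R1 - 2*r) R1) := by
    intro t ht
    by_cases hg : n (t+r) - n (t-r) ≤ γ * ∫ x in (0:ℝ)..(t-r), n x
    · exact Or.inl ⟨ht, hg⟩
    · by_cases ht2 : t ≤ R1 - 2*r
      · refine Or.inr (Or.inl ⟨ht, hg, ht2, ?_⟩)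
        have h1 : n R0 ≤ n (t - r) := hmono (by linarith [ht.1])
        have h2 : 0 ≤ fInt n (t - r) := fInt_nonneg n hmono hnn (by linarith [ht.1])
        simp only [nPot]
        nlinarith [mul_nonneg hlam0 h2]
      · push_neg at ht2
        exact Or.inr (Or.inr ⟨ht2, ht.2⟩)
  -- arithmetic: the key numeric inequality
  have harith : R/2 + (2*r*(N:ℝ) + r + 2*r) ≤ R1 - 3*R0 := by
    refine arith_main r R R0 R1 Dβ ε lam ρ L N hr hR0 hD hRD hR1 hε hrs hlam hρ1 hρlog hLdef ?_ hlog1ε hL0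
    exact Nat.ceil_lt_add_one (div_nonneg hL0 hlog1ε.le)
  -- put everything together
  have hIoc : volume (Set.Ioc (3*R0) R1) = ENNReal.ofReal (R1 - 3*R0) := Real.volume_Ioc
  have hsub : ENNReal.ofReal (R1 - 3*R0) ≤
      volume {t : ℝ | t ∈ Set.Ioc (3*R0) R1 ∧
        n (t+r) - n (t-r) ≤ γ * ∫ x in (0:ℝ)..(t-r), n x}
      + ENNReal.ofReal (2*r*(N:ℝ) + r + 2*r) := by
    calc ENNReal.ofReal (R1 - 3*R0) = volume (Set.Ioc (3*R0) R1) := hIoc.symm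
      _ ≤ volume ({t : ℝ | t ∈ Set.Ioc (3*R0) R1 ∧
            n (t+r) - n (t-r) ≤ γ * ∫ x in (0:ℝ)..(t-r), n x}
            ∪ (badA n r γ lam R0 R1 (n R0) ∪ Set.Ioc (R1 - 2*r) R1)) := measure_mono hincl
      _ ≤ volume {t : ℝ | t ∈ Set.Ioc (3*R0) R1 ∧
            n (t+r) - n (t-r) ≤ γ * ∫ x in (0:ℝ)..(t-r), n x}
          + volume (badA n r γ lam R0 R1 (n R0) ∪ Set.Ioc (R1 - 2*r) R1) := measure_union_le _ _
      _ ≤ volume {t : ℝ | t ∈ Set.Ioc (3*R0) R1 ∧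
            n (t+r) - n (t-r) ≤ γ * ∫ x in (0:ℝ)..(t-r), n x}
          + (volume (badA n r γ lam R0 R1 (n R0)) + volume (Set.Ioc (R1 - 2*r) R1)) := by
            gcongr; exact measure_union_le _ _
      _ ≤ volume {t : ℝ | t ∈ Set.Ioc (3*R0) R1 ∧
            n (t+r) - n (t-r) ≤ γ * ∫ x in (0:ℝ)..(t-r), n x}
          + (ENNReal.ofReal (2*r*(N:ℝ) + r) + ENNReal.ofReal (2*r)) := by
            gcongr
            rw [Real.volume_Ioc]
            exact ENNReal.ofReal_le_ofReal (by linarith)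
      _ = volume {t : ℝ | t ∈ Set.Ioc (3*R0) R1 ∧
            n (t+r) - n (t-r) ≤ γ * ∫ x in (0:ℝ)..(t-r), n x}
          + ENNReal.ofReal (2*r*(N:ℝ) + r + 2*r) := by
            rw [← ENNReal.ofReal_add (by positivity) (by positivity)]
  have hfin : ENNReal.ofReal (R/2) + ENNReal.ofReal (2*r*(N:ℝ) + r + 2*r)
      ≤ volume {t : ℝ | t ∈ Set.Ioc (3*R0) R1 ∧
        n (t+r) - n (t-r) ≤ γ * ∫ x in (0:ℝ)..(t-r), n x}
      + ENNReal.ofReal (2*r*(N:ℝ) + r + 2*r) := by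
    refine le_trans ?_ hsub
    rw [← ENNReal.ofReal_add (by positivity) (by positivity)]
    exact ENNReal.ofReal_le_ofReal harith
  exact (ENNReal.add_le_add_iff_right ENNReal.ofReal_ne_top).mp hfin

/-- (`μ(S_γ) ≥ R/2`.) With `β = r/R`, `D_β = 2(q+1)ln(1/β)`,
`R₀ = R/D_β`, `R₁ = R - R₀`, assuming `r < R₀`, `β D_β < 1/(5√2)`, `R₀ + r < R₁/100`
and the light-ball condition `|Ball(z,R₁)| ≤ (1/β)^{q+1} |Ball(z,R₀)|`, the set `S_γ`
of radii `t ∈ (3R₀,R₁]` for which `Ball(z,t)` has a `γ`-light shell of width `r`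
(`γ = 25r/R₀²`) has Lebesgue measure at least `R/2`. -/
theorem stmt7 (X : Type) [MetricSpace X] [Fintype X] (z : X)
    (q r R β Dβ R0 R1 γ : ℝ) (hq : 1 ≤ q) (hr : 0 < r) (hR : 0 < R) (hrR : r < R)
    (hβ : β = r / R) (hD : Dβ = 2 * (q + 1) * Real.log (1 / β))
    (hR0 : R0 = R / Dβ) (hR1 : R1 = R - R0)
    (hrR0 : r < R0) (hβD : β * Dβ < 1 / (5 * Real.sqrt 2)) (hsmall : R0 + r < R1 / 100)
    (hγ : γ = 25 * r / R0 ^ 2)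
    (hlightball : (Set.ncard {v : X | dist z v ≤ R1} : ℝ)
      ≤ (1 / β) ^ (q + 1) * (Set.ncard {v : X | dist z v ≤ R0} : ℝ)) :
    ENNReal.ofReal (R / 2)
      ≤ MeasureTheory.volume {t : ℝ | t ∈ Set.Ioc (3 * R0) R1 ∧
          (Set.ncard {v : X | dist z v ≤ t + r} : ℝ)
              - (Set.ncard {v : X | dist z v ≤ t - r} : ℝ)
            ≤ γ * ∫ x in (0 : ℝ)..(t - r), (Set.ncard {v : X | dist z v ≤ x} : ℝ)} := by
  have hs2p : (0:ℝ) < Real.sqrt 2 := Real.sqrt_pos.mpr (by norm_num)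
  have hβpos : 0 < β := by rw [hβ]; positivity
  have hβ1 : β < 1 := by rw [hβ, div_lt_one hR]; exact hrR
  have hlogβ : 0 < Real.log (1/β) := Real.log_pos (one_lt_one_div hβpos hβ1)
  have hDpos : 0 < Dβ := by rw [hD]; positivity
  have hR0pos : 0 < R0 := lt_trans hr hrR0
  have hRD : R0 * Dβ = R := by rw [hR0]; field_simp
  have hD101 : (101:ℝ) ≤ Dβ := by nlinarith [hsmall, hR1, hRD, hr, hR0pos]
  have hβDβ : β * Dβ = r / R0 := by
    rw [hβ, ← hRD]; field_simp
  have hrs : 5 * Real.sqrt 2 * r ≤ R0 := by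
    have h1 : r / R0 < 1 / (5 * Real.sqrt 2) := by rw [← hβDβ]; exact hβD
    rw [div_lt_div_iff₀ hR0pos (by positivity)] at h1
    nlinarith
  set n : ℝ → ℝ := fun t => ((Set.ncard {v : X | dist z v ≤ t} : ℕ) : ℝ) with hn
  have hmono : Monotone n := by
    intro a b hab
    simp only [hn, Nat.cast_le]
    exact Set.ncard_le_ncard (fun v hv => le_trans hv hab) (Set.toFinite _)
  have hnn : ∀ t, 0 ≤ n t := fun t => Nat.cast_nonneg _
  have hn1 : 1 ≤ n R0 := by
    have h : ({v : X | dist z v ≤ R0}).Nonempty := ⟨z, by simp [dist_self]; positivity⟩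
    have := Set.ncard_pos (s := {v : X | dist z v ≤ R0}) (Set.toFinite _) |>.mpr h
    simp only [hn]
    exact_mod_cast this
  have hρ1 : 1 ≤ (1/β) ^ (q+1) := by
    apply Real.one_le_rpow (by rw [le_div_iff₀ hβpos]; linarith) (by linarith)
  have hρlog : Real.log ((1/β) ^ (q+1)) = Dβ / 2 := by
    rw [Real.log_rpow (by positivity), hD]; ring
  exact aux n r R R0 R1 Dβ γ (5 / (Real.sqrt 2 * R0)) (5 * Real.sqrt 2 * r / R0)
    ((1/β) ^ (q+1)) hmono hnn hn1 hr hR0pos hlightball rfl rfl hγ hρ1 hρlog hRD hD101 hrs hR1
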